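/- Let E, A ∈ ℂ^{m×m} with E/τ + A invertible for τ > 0, and B ∈ ℂ^{m×p}, C ∈ ℂ^{m×p}. Given any sequence (y_n)_{n≥0} in ℂ^p with y_0 = 0, define z_n recursively by z_0 = 0 and (E/τ + A) z_n = B y_n + (E/τ) z_{n−1}. Simultaneously define ω_n ∈ ℂ^{p×p} as the Taylor coefficients of ξ ↦ Cᵀ((1−ξ)E/τ + A)^{-1}B at 0. Then Cᵀ z_n = Σ_{k=0}^n ω_{n−k} y_k for all n ≥ 0. -/

import Mathlib

open Matrix PowerSeries Finset


private lemma mulVec_sum' {m' n' : ℕ} {ι : Type*} (M : Matrix (Fin m') (Fin n') ℂ)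
    (s : Finset ι) (f : ι → Fin n' → ℂ) :
    M *ᵥ (∑ i ∈ s, f i) = ∑ i ∈ s, M *ᵥ f i := by
  exact map_sum (Matrix.mulVecLin M) f s

/-- the implicit Euler solution of the linear subsystem reproduces the
convolution quadrature sums with weights `ω n = Cᵀ K n B`, where `Σ K_n ξ^n` is the
formal power series inverse of `(1-ξ)E/τ + A`. -/
theorem stmt14 {m p : ℕ} (E A : Matrix (Fin m) (Fin m) ℂ) (B C : Matrix (Fin m) (Fin p) ℂ)
    (τ : ℝ) (hτ : 0 < τ)
    (hinv : IsUnit (((τ : ℂ)⁻¹) • E + A))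
    (K : ℕ → Matrix (Fin m) (Fin m) ℂ)
    (hK : (((1 - PowerSeries.X) * PowerSeries.C (R := ℂ) (τ : ℂ)⁻¹) •
            E.map (PowerSeries.C (R := ℂ)) + A.map (PowerSeries.C (R := ℂ))) *
          (Matrix.of fun i j => PowerSeries.mk fun n => K n i j) = 1)
    (ω : ℕ → Matrix (Fin p) (Fin p) ℂ)
    (hω : ∀ n, ω n = Cᵀ * K n * B)
    (y : ℕ → Fin p → ℂ) (z : ℕ → Fin m → ℂ)
    (hy0 : y 0 = 0) (hz0 : z 0 = 0)
    (hrec : ∀ n : ℕ, 1 ≤ n →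
      (((τ : ℂ)⁻¹) • E + A) *ᵥ z n = B *ᵥ y n + ((τ : ℂ)⁻¹) • (E *ᵥ z (n - 1))) :
    ∀ n : ℕ, Cᵀ *ᵥ z n = ∑ k ∈ range (n + 1), ω (n - k) *ᵥ y k := by
  set M₀ : Matrix (Fin m) (Fin m) ℂ := ((τ : ℂ)⁻¹) • E + A with hM₀
  -- entries of the power-series factor
  have hent : ∀ i x : Fin m,
      ((((1 - PowerSeries.X) * PowerSeries.C (R := ℂ) (τ : ℂ)⁻¹) •
            E.map (PowerSeries.C (R := ℂ)) + A.map (PowerSeries.C (R := ℂ))) i x)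
      = PowerSeries.C (R := ℂ) (M₀ i x) + PowerSeries.X * PowerSeries.C (R := ℂ) (-((τ : ℂ)⁻¹ * E i x)) := by
    intro i x
    simp only [Matrix.add_apply, Matrix.smul_apply, Matrix.map_apply, smul_eq_mul, hM₀,
      sub_mul, one_mul]
    rw [map_neg, map_add, _root_.map_mul]
    ring
  -- coefficient identities
  have hK0 : M₀ * K 0 = 1 := by
    ext i j
    have := congrFun (congrFun hK i) j
    rw [Matrix.mul_apply] at this
    have h0 := congrArg (PowerSeries.coeff (R := ℂ) 0) this
    rw [map_sum] at h0
    simp only [hent, Matrix.of_apply] at h0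
    simp only [add_mul, map_add, coeff_zero_eq_constantCoeff, _root_.map_mul, mul_assoc] at h0
    simp only [constantCoeff_C, constantCoeff_X, zero_mul, mul_zero, add_zero,
      constantCoeff_mk] at h0
    rw [Matrix.mul_apply]
    rw [h0]
    by_cases h : i = j <;> simp [Matrix.one_apply, h, coeff_zero_eq_constantCoeff]
  have hKs : ∀ n : ℕ, M₀ * K (n + 1) = ((τ : ℂ)⁻¹) • (E * K n) := by
    intro n
    ext i j
    have := congrFun (congrFun hK i) j
    rw [Matrix.mul_apply] at this
    have h0 := congrArg (PowerSeries.coeff (R := ℂ) (n + 1)) this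
    rw [map_sum] at h0
    simp only [hent, Matrix.of_apply] at h0
    simp only [add_mul, map_add, coeff_C_mul, mul_assoc, coeff_succ_X_mul, coeff_mk] at h0
    have h1 : (PowerSeries.coeff (R := ℂ) (n + 1)) ((1 : Matrix (Fin m) (Fin m) (PowerSeries ℂ)) i j)
        = 0 := by
      by_cases h : i = j <;> simp [Matrix.one_apply, h, coeff_one]
    rw [h1] at h0
    have h0' : ∑ x : Fin m, M₀ i x * K (n + 1) x j
        = ∑ x : Fin m, (τ : ℂ)⁻¹ * (E i x * K n x j) := by
      rw [Finset.sum_add_distrib] at h0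
      have h2 : ∑ x : Fin m, -((τ : ℂ)⁻¹ * E i x) * K n x j
          = -∑ x : Fin m, (τ : ℂ)⁻¹ * (E i x * K n x j) := by
        rw [← Finset.sum_neg_distrib]
        congr 1; ext x; ring
      rw [h2] at h0
      exact add_neg_eq_zero.mp h0
    rw [Matrix.mul_apply, Matrix.smul_apply, Matrix.mul_apply, h0', smul_eq_mul,
      Finset.mul_sum]
  -- M₀ has left inverse K 0
  have hK0' : K 0 * M₀ = 1 := mul_eq_one_comm.mp hK0
  -- main induction: explicit formula for z
  have hz : ∀ n : ℕ, z n = ∑ k ∈ range (n + 1), K (n - k) *ᵥ (B *ᵥ y k) := by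
    intro n
    induction n with
    | zero => simp [hz0, hy0]
    | succ n ih =>
      have hr := hrec (n + 1) (Nat.le_add_left 1 n)
      simp only [Nat.add_sub_cancel] at hr
      have key : M₀ *ᵥ (∑ k ∈ range (n + 2), K (n + 1 - k) *ᵥ (B *ᵥ y k))
          = B *ᵥ y (n + 1) + ((τ : ℂ)⁻¹) • (E *ᵥ z n) := by
        rw [Finset.sum_range_succ, Matrix.mulVec_add, mulVec_sum']
        have hlast : M₀ *ᵥ (K (n + 1 - (n + 1)) *ᵥ (B *ᵥ y (n + 1))) = B *ᵥ y (n + 1) := by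
          simp only [Nat.sub_self]
          rw [Matrix.mulVec_mulVec, hK0, Matrix.one_mulVec]
        have hrest : ∑ k ∈ range (n + 1), M₀ *ᵥ (K (n + 1 - k) *ᵥ (B *ᵥ y k))
            = ((τ : ℂ)⁻¹) • (E *ᵥ z n) := by
          rw [ih, mulVec_sum', Finset.smul_sum]
          refine Finset.sum_congr rfl fun k hk => ?_
          have hk' : k ≤ n := Nat.lt_succ_iff.mp (Finset.mem_range.mp hk)
          have : n + 1 - k = (n - k) + 1 := by omega
          rw [this, Matrix.mulVec_mulVec, hKs (n - k), Matrix.mulVec_mulVec,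
            Matrix.smul_mul, Matrix.smul_mulVec]
          simp [Matrix.mulVec_mulVec, Matrix.mul_assoc]
        rw [hlast, hrest, add_comm]
      have : z (n + 1) = ∑ k ∈ range (n + 2), K (n + 1 - k) *ᵥ (B *ᵥ y k) := by
        have h1 := congrArg (fun v => K 0 *ᵥ v) (hr.trans key.symm)
        simpa [Matrix.mulVec_mulVec, hK0', Matrix.one_mulVec] using h1
      exact this
  intro n
  rw [hz n, mulVec_sum']
  refine Finset.sum_congr rfl fun k hk => ?_
  rw [hω (n - k)]
  simp [Matrix.mulVec_mulVec, Matrix.mul_assoc]
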